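/- Let Σ_P and Σ_T be types and Δ : Σ_P → Σ_T → Bool. Then M_Δ does not contain the wildcard matrix if and only if there exist a type σ and functions φ : Σ_P → Option σ and ψ : Σ_T → Option σ such that for all p ∈ Σ_P and t ∈ Σ_T, Δ p t = true if and only if there exists s : σ with φ p = some s and ψ t = some s. (This expresses that wildcard-free matching relations are exactly those reducible to exact matching of representative symbols.) -/

import Mathlib

/-- `M_Δ` does not contain the wildcard matrix if and only if matching under `Δ`
reduces to exact matching: there are maps `φ`, `ψ` assigning to each pattern/text
symbol an optional representative symbol in some type `σ`, such that `Δ p t = true`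
exactly when `p` and `t` have the same (defined) representative. -/
theorem no_wildcard_iff_exact_matching {σP σT : Type u} (Δ : σP → σT → Bool) :
    (¬ ∃ (p₁ p₂ : σP) (t₁ t₂ : σT),
        Δ p₁ t₁ = true ∧ Δ p₁ t₂ = true ∧ Δ p₂ t₁ = true ∧ Δ p₂ t₂ = false) ↔
      ∃ (σ : Type u) (φ : σP → Option σ) (ψ : σT → Option σ),
        ∀ (p : σP) (t : σT), (Δ p t = true ↔ ∃ s : σ, φ p = some s ∧ ψ t = some s) := by
  classical
  constructor
  · intro h
    have key : ∀ p₁ p₂ t₁ t₂, Δ p₁ t₁ = true → Δ p₁ t₂ = true → Δ p₂ t₁ = true →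
        Δ p₂ t₂ = true := by
      intro p₁ p₂ t₁ t₂ h1 h2 h3
      by_contra hc
      exact h ⟨p₁, p₂, t₁, t₂, h1, h2, h3, by simpa using hc⟩
    refine ⟨Set σT,
      fun p => if hp : ∃ t, Δ p t = true then some {t | Δ p t = true} else none,
      fun t => if ht : ∃ p, Δ p t = true then some {t' | Δ ht.choose t' = true} else none,
      ?_⟩
    intro p t
    constructor
    · intro hpt
      have hp : ∃ t', Δ p t' = true := ⟨t, hpt⟩
      have ht : ∃ p', Δ p' t = true := ⟨p, hpt⟩
      have hc := ht.choose_spec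
      refine ⟨{t' | Δ p t' = true}, by simp [hp], ?_⟩
      simp only [ht, dif_pos]
      congr 1
      ext t'
      simp only [Set.mem_setOf_eq]
      exact ⟨fun h' => key ht.choose p t t' hc h' hpt,
             fun h' => key p ht.choose t t' hpt h' hc⟩
    · rintro ⟨s, hs1, hs2⟩
      by_cases hp : ∃ t', Δ p t' = true
      · by_cases ht : ∃ p', Δ p' t = true
        · simp only [hp, dif_pos, Option.some_inj] at hs1
          simp only [ht, dif_pos, Option.some_inj] at hs2
          have hc := ht.choose_spec
          have : t ∈ s := hs2 ▸ hc
          rw [← hs1] at this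
          exact this
        · simp only [ht, dif_neg, not_false_iff] at hs2
          exact absurd hs2 (by simp)
      · simp only [hp, dif_neg, not_false_iff] at hs1
        exact absurd hs1 (by simp)
  · rintro ⟨σ, φ, ψ, hφψ⟩ ⟨p₁, p₂, t₁, t₂, h1, h2, h3, h4⟩
    obtain ⟨s, hp1, ht1⟩ := (hφψ p₁ t₁).mp h1
    obtain ⟨s', hp1', ht2⟩ := (hφψ p₁ t₂).mp h2
    obtain ⟨s'', hp2, ht1'⟩ := (hφψ p₂ t₁).mp h3
    rw [hp1] at hp1'; rw [ht1] at ht1'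
    obtain rfl : s = s' := by injection hp1'
    obtain rfl : s = s'' := by injection ht1'
    have : Δ p₂ t₂ = true := (hφψ p₂ t₂).mpr ⟨s, hp2, ht2⟩
    rw [this] at h4; exact Bool.noConfusion h4
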